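/- In a residuated lattice, every proper α-filter equals the intersection of the prime α-filters containing it. -/
import Mathlib


/-- A (bounded, integral, commutative) residuated lattice. -/
class ResLattice (A : Type*) extends Lattice A, CommMonoid A, OrderBot A where
  himp : A → A → A
  adjunction : ∀ x y z : A, x * y ≤ z ↔ x ≤ himp y z
  le_one : ∀ x : A, x ≤ 1

variable {A : Type*} [ResLattice A]

/-- Coannihilator of a subset: `X^⊥ = {a | a ⊔ x = 1 for all x ∈ X}`. -/
def Coann (X : Set A) : Set A := {a | ∀ x ∈ X, a ⊔ x = 1}

/-- Coannulet of an element: `x^⊥`. -/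
def rperp (x : A) : Set A := Coann {x}

/-- The principal filter generated by `x`. -/
def PFil (x : A) : Set A := {a | ∃ n : ℕ, 0 < n ∧ x ^ n ≤ a}

/-- Filters of a residuated lattice. -/
def IsRLFilter (F : Set A) : Prop :=
  F.Nonempty ∧ (∀ x ∈ F, ∀ y ∈ F, x * y ∈ F) ∧ (∀ x ∈ F, ∀ y : A, x ⊔ y ∈ F)

/-- Prime filters. -/
def IsRLPrime (P : Set A) : Prop :=
  IsRLFilter P ∧ P ≠ Set.univ ∧ ∀ x y : A, x ⊔ y ∈ P → x ∈ P ∨ y ∈ P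

/-- Minimal prime filters. -/
def IsRLMinPrime (P : Set A) : Prop :=
  IsRLPrime P ∧ ∀ Q : Set A, IsRLPrime Q → Q ⊆ P → Q = P

/-- Quasicomplemented residuated lattice. -/
def Quasicomplemented (A : Type*) [ResLattice A] : Prop :=
  ∀ x : A, ∃ y : A, Coann (rperp x) = rperp y

/-- α-filters. -/
def IsAlphaFilter (F : Set A) : Prop :=
  IsRLFilter F ∧ ∀ x ∈ F, Coann (rperp x) ⊆ F

/-- The α-filter generated by a subset. -/
def alphaGen (X : Set A) : Set A := ⋂₀ {G : Set A | IsAlphaFilter G ∧ X ⊆ G}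

lemma rl_le_one (a : A) : a ≤ 1 := ResLattice.le_one a

lemma rl_mul_mono {a b : A} (h : a ≤ b) (c : A) : a * c ≤ b * c :=
  (ResLattice.adjunction a c (b*c)).mpr
    (h.trans ((ResLattice.adjunction b c (b*c)).mp le_rfl))

lemma rl_mul_mono' {a b : A} (h : a ≤ b) (c : A) : c * a ≤ c * b := by
  rw [mul_comm c a, mul_comm c b]; exact rl_mul_mono h c

lemma rl_mul_le_right (a b : A) : a * b ≤ b := by
  simpa using rl_mul_mono (rl_le_one a) b

lemma rl_mul_le_left (a b : A) : a * b ≤ a := by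
  rw [mul_comm]; exact rl_mul_le_right b a

lemma rl_mul_sup_le (a b c : A) : (a ⊔ b) * c ≤ a * c ⊔ b * c := by
  refine (ResLattice.adjunction _ _ _).mpr (sup_le ?_ ?_)
  · exact (ResLattice.adjunction _ _ _).mp le_sup_left
  · exact (ResLattice.adjunction _ _ _).mp le_sup_right

lemma rl_sup_mul_le (a b c : A) : c * (a ⊔ b) ≤ c * a ⊔ c * b := by
  rw [mul_comm c, mul_comm c a, mul_comm c b]; exact rl_mul_sup_le a b c

lemma rl_eq_one {a : A} (h : (1:A) ≤ a) : a = 1 := le_antisymm (rl_le_one a) h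

lemma rl_mul_sup_one {a b c : A} (h1 : a ⊔ c = 1) (h2 : b ⊔ c = 1) : a * b ⊔ c = 1 := by
  apply rl_eq_one
  calc (1:A) = (a ⊔ c) * (b ⊔ c) := by rw [h1, h2, one_mul]
    _ ≤ a * (b ⊔ c) ⊔ c * (b ⊔ c) := rl_mul_sup_le _ _ _
    _ ≤ a * b ⊔ c := by
        refine sup_le ?_ ((rl_mul_le_left c _).trans le_sup_right)
        calc a * (b ⊔ c) ≤ a * b ⊔ a * c := rl_sup_mul_le _ _ _
          _ ≤ a * b ⊔ c := sup_le_sup_left (rl_mul_le_right a c) _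

lemma rl_sup_pow (x y : A) : ∀ n k : ℕ, (x ⊔ y) ^ (n + k) ≤ x ^ n ⊔ y ^ k := by
  intro n
  induction n with
  | zero => intro k; rw [zero_add, pow_zero]; exact (rl_le_one _).trans le_sup_left
  | succ n ih =>
    intro k
    induction k with
    | zero => rw [add_zero, pow_zero]; exact (rl_le_one _).trans le_sup_right
    | succ k ihk =>
      have he : (x ⊔ y) ^ (n + 1 + (k + 1)) = (x ⊔ y) * (x ⊔ y) ^ (n + (k + 1)) := by
        rw [← pow_succ']; ring_nf
      rw [he]
      calc (x ⊔ y) * (x ⊔ y) ^ (n + (k + 1))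
          ≤ x * (x ⊔ y) ^ (n + (k + 1)) ⊔ y * (x ⊔ y) ^ (n + (k + 1)) := rl_mul_sup_le _ _ _
        _ ≤ x ^ (n+1) ⊔ y ^ (k+1) := by
            refine sup_le ?_ ?_
            · calc x * (x ⊔ y) ^ (n + (k + 1)) ≤ x * (x ^ n ⊔ y ^ (k+1)) :=
                    rl_mul_mono' (ih (k+1)) x
                _ ≤ x * x ^ n ⊔ x * y ^ (k+1) := rl_sup_mul_le _ _ _
                _ ≤ x ^ (n+1) ⊔ y ^ (k+1) := by
                    refine sup_le (le_sup_left.trans_eq' ?_) ((rl_mul_le_right _ _).trans le_sup_right)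
                    rw [← pow_succ']
            · have h2 : (n + 1 + k : ℕ) = n + (k+1) := by ring
              calc y * (x ⊔ y) ^ (n + (k + 1)) = y * (x ⊔ y) ^ (n + 1 + k) := by rw [h2]
                _ ≤ y * (x ^ (n+1) ⊔ y ^ k) := rl_mul_mono' ihk y
                _ ≤ y * x ^ (n+1) ⊔ y * y ^ k := rl_sup_mul_le _ _ _
                _ ≤ x ^ (n+1) ⊔ y ^ (k+1) := by
                    refine sup_le ((rl_mul_le_right _ _).trans le_sup_left) (le_sup_right.trans_eq' ?_)
                    rw [← pow_succ']

lemma rl_mem_D {u z : A} : z ∈ Coann (rperp u) ↔ ∀ c : A, c ⊔ u = 1 → z ⊔ c = 1 := by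
  simp [Coann, rperp, Set.mem_setOf_eq]

-- sup eq one transfer along ≤
lemma rl_sup_one_of_le {a b c : A} (h : a ≤ b) (h1 : c ⊔ a = 1) : c ⊔ b = 1 :=
  rl_eq_one (h1 ▸ sup_le_sup_left h c)

lemma rl_self_mem_D (u : A) : u ∈ Coann (rperp u) := by
  intro c hc
  simp only [rperp, Coann, Set.mem_setOf_eq, Set.mem_singleton_iff, forall_eq] at hc
  rw [sup_comm]; exact hc

lemma rl_D_antitone {u v : A} (h : u ≤ v) : Coann (rperp v) ⊆ Coann (rperp u) := by
  intro z hz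
  rw [rl_mem_D] at hz ⊢
  exact fun c hc => hz c (rl_sup_one_of_le h hc)

lemma rl_D_mul {u v z w : A} (hz : z ∈ Coann (rperp u)) (hw : w ∈ Coann (rperp v)) :
    z * w ∈ Coann (rperp (u * v)) := by
  rw [rl_mem_D] at hz hw ⊢
  intro c hc
  have hu : c ⊔ u = 1 := rl_sup_one_of_le (rl_mul_le_left u v) hc
  have hv : c ⊔ v = 1 := rl_sup_one_of_le (rl_mul_le_right u v) hc
  exact rl_mul_sup_one (hz c hu) (hw c hv)

lemma rl_D_sup {u z : A} (hz : z ∈ Coann (rperp u)) (y : A) : z ⊔ y ∈ Coann (rperp u) := by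
  rw [rl_mem_D] at hz ⊢
  intro c hc
  apply rl_eq_one
  calc (1:A) = z ⊔ c := (hz c hc).symm
    _ ≤ z ⊔ y ⊔ c := sup_le_sup_right le_sup_left c

lemma rl_D_D {u z : A} (hz : z ∈ Coann (rperp u)) : Coann (rperp z) ⊆ Coann (rperp u) := by
  intro w hw
  rw [rl_mem_D] at hz hw ⊢
  intro c hc
  exact hw c (by rw [sup_comm]; exact hz c hc)

lemma rl_D_prime {u v w a : A} (hu : a ∈ Coann (rperp u)) (hv : a ∈ Coann (rperp v))
    (hw : w ≤ u ⊔ v) : a ∈ Coann (rperp w) := by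
  rw [rl_mem_D] at hu hv ⊢
  intro c hc
  have h0 : c ⊔ (u ⊔ v) = 1 := rl_sup_one_of_le hw hc
  have h1 : (c ⊔ u) ⊔ v = 1 := by rwa [sup_assoc]
  have h2 : a ⊔ (c ⊔ u) = 1 := hv (c ⊔ u) h1
  have h3 : (a ⊔ c) ⊔ u = 1 := by rwa [sup_assoc]
  have h4 : a ⊔ (a ⊔ c) = 1 := hu (a ⊔ c) h3
  rwa [← sup_assoc, sup_idem] at h4

lemma rl_one_mem {F : Set A} (hF : IsRLFilter F) : (1:A) ∈ F := by
  obtain ⟨m, hm⟩ := hF.1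
  have := hF.2.2 m hm 1
  rwa [sup_eq_right.mpr (rl_le_one m)] at this

lemma rl_pow_mem {F : Set A} (hF : IsRLFilter F) {u : A} (hu : u ∈ F) :
    ∀ n : ℕ, u ^ n ∈ F := by
  intro n
  induction n with
  | zero => simpa using rl_one_mem hF
  | succ n ih => rw [pow_succ]; exact hF.2.1 _ ih _ hu

/-- The α-filter extension of `M` by `x`. -/
def RLExt (M : Set A) (x : A) : Set A :=
  {z | ∃ m ∈ M, ∃ n : ℕ, z ∈ Coann (rperp (m * x ^ n))}

lemma rl_subset_ext {M : Set A} (x : A) : M ⊆ RLExt M x := by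
  intro m hm
  exact ⟨m, hm, 0, by simpa using rl_self_mem_D m⟩

lemma rl_mem_ext_self {M : Set A} (hM : M.Nonempty) (x : A) : x ∈ RLExt M x := by
  obtain ⟨m, hm⟩ := hM
  refine ⟨m, hm, 1, ?_⟩
  have h : m * x ^ 1 ≤ x := by simpa using rl_mul_le_right m x
  exact rl_D_antitone h (rl_self_mem_D x)

lemma rl_ext_alpha {M : Set A} (hM : IsAlphaFilter M) (x : A) :
    IsAlphaFilter (RLExt M x) := by
  refine ⟨⟨⟨x, rl_mem_ext_self hM.1.1 x⟩, ?_, ?_⟩, ?_⟩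
  · rintro z ⟨m₁, hm₁, n₁, hz⟩ w ⟨m₂, hm₂, n₂, hw⟩
    refine ⟨m₁ * m₂, hM.1.2.1 _ hm₁ _ hm₂, n₁ + n₂, ?_⟩
    have h : (m₁ * x ^ n₁) * (m₂ * x ^ n₂) = m₁ * m₂ * x ^ (n₁ + n₂) := by
      rw [pow_add]; exact mul_mul_mul_comm _ _ _ _
    exact h ▸ rl_D_mul hz hw
  · rintro z ⟨m, hm, n, hz⟩ y
    exact ⟨m, hm, n, rl_D_sup hz y⟩
  · rintro z ⟨m, hm, n, hz⟩ w hw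
    exact ⟨m, hm, n, rl_D_D hz hw⟩

theorem stmt14 (F : Set A) (hF : IsAlphaFilter F) (hproper : F ≠ Set.univ) :
    F = ⋂₀ {P : Set A | IsRLPrime P ∧ IsAlphaFilter P ∧ F ⊆ P} := by
  apply Set.Subset.antisymm
  · exact Set.subset_sInter fun P hP => hP.2.2
  · intro a ha
    by_contra haF
    -- the collection of α-filters containing F and avoiding a
    set S : Set (Set A) := {G | IsAlphaFilter G ∧ F ⊆ G ∧ a ∉ G} with hS
    have hFS : F ∈ S := ⟨hF, Set.Subset.rfl, haF⟩
    obtain ⟨M, hFM, hMS, hMmax⟩ : ∃ M, F ⊆ M ∧ M ∈ S ∧ ∀ G ∈ S, M ⊆ G → G ⊆ M := by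
      have hchainub : ∀ c ⊆ S, IsChain (· ⊆ ·) c → c.Nonempty →
          ∃ ub ∈ S, ∀ s ∈ c, s ⊆ ub := by
        rintro c hcS hchain ⟨G₀, hG₀⟩
        refine ⟨⋃₀ c, ⟨⟨⟨?_, ?_, ?_⟩, ?_⟩, ?_, ?_⟩, fun s hs => Set.subset_sUnion_of_mem hs⟩
        · obtain ⟨g, hg⟩ := (hcS hG₀).1.1.1
          exact ⟨g, G₀, hG₀, hg⟩
        · rintro z ⟨G₁, hG₁, hz⟩ w ⟨G₂, hG₂, hw⟩
          rcases hchain.total hG₁ hG₂ with h | h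
          · exact ⟨G₂, hG₂, (hcS hG₂).1.1.2.1 _ (h hz) _ hw⟩
          · exact ⟨G₁, hG₁, (hcS hG₁).1.1.2.1 _ hz _ (h hw)⟩
        · rintro z ⟨G₁, hG₁, hz⟩ y
          exact ⟨G₁, hG₁, (hcS hG₁).1.1.2.2 _ hz y⟩
        · rintro z ⟨G₁, hG₁, hz⟩ w hw
          exact ⟨G₁, hG₁, (hcS hG₁).1.2 _ hz hw⟩
        · exact (hcS hG₀).2.1.trans (Set.subset_sUnion_of_mem hG₀)
        · rintro ⟨G₁, hG₁, hz⟩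
          exact (hcS hG₁).2.2 hz
      obtain ⟨M, hFM, hmax⟩ := zorn_subset_nonempty S hchainub F hFS
      exact ⟨M, hFM, hmax.1, fun G hG hMG => hmax.2 hG hMG⟩
    obtain ⟨hMα, hFsubM, haM⟩ := hMS
    -- key: for x ∉ M, a ∈ RLExt M x
    have hkey : ∀ x : A, x ∉ M → a ∈ RLExt M x := by
      intro x hx
      by_contra haE
      have hE : RLExt M x ∈ S :=
        ⟨rl_ext_alpha hMα x, hFsubM.trans (rl_subset_ext x), haE⟩
      exact hx (hMmax _ hE (rl_subset_ext x) (rl_mem_ext_self hMα.1.1 x))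
    -- M is prime
    have hprime : IsRLPrime M := by
      refine ⟨hMα.1, fun h => haM (h ▸ Set.mem_univ a), ?_⟩
      intro x y hxy
      by_contra hcon
      push_neg at hcon
      obtain ⟨hx, hy⟩ := hcon
      obtain ⟨m₁, hm₁, n, ha₁⟩ := hkey x hx
      obtain ⟨m₂, hm₂, k, ha₂⟩ := hkey y hy
      set w : A := m₁ * m₂ * (x ⊔ y) ^ (n + k) with hw
      have hwM : w ∈ M :=
        hMα.1.2.1 _ (hMα.1.2.1 _ hm₁ _ hm₂) _ (rl_pow_mem hMα.1 hxy (n + k))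
      have hle : w ≤ m₁ * x ^ n ⊔ m₂ * y ^ k := by
        calc w ≤ (m₁ * m₂) * (x ^ n ⊔ y ^ k) := rl_mul_mono' (rl_sup_pow x y n k) _
          _ ≤ (m₁ * m₂) * x ^ n ⊔ (m₁ * m₂) * y ^ k := rl_sup_mul_le _ _ _
          _ ≤ m₁ * x ^ n ⊔ m₂ * y ^ k := by
              refine sup_le (le_sup_left.trans' ?_) (le_sup_right.trans' ?_)
              · rw [mul_assoc]
                exact rl_mul_mono' (rl_mul_le_right m₂ _) m₁
              · rw [mul_comm m₁ m₂, mul_assoc]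
                exact rl_mul_mono' (rl_mul_le_right m₁ _) m₂
      have haw : a ∈ Coann (rperp w) := rl_D_prime ha₁ ha₂ hle
      exact haM (hMα.2 w hwM haw)
    exact haM (ha M ⟨hprime, hMα, hFsubM⟩)
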